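/- The set 𝒪 = {(x₁,x₂) ∈ ℝ² : x₁ > ε₁ and x₂ > −a₂x₁}, with ε₁ > 0 and a₂ > 0, is mapped by φ(x₁,x₂) = (x₁, a₁x₁x₂/(a₂x₁+x₂)) (a₁ > 0) diffeomorphically onto {(ξ₁,ξ₂) : ξ₁ > ε₁ and a₁ξ₁ > ξ₂}; in particular φ is injective on 𝒪 with C¹ inverse. -/

import Mathlib

/-- The bioreactor change of coordinates
φ(x₁,x₂) = (x₁, a₁x₁x₂/(a₂x₁+x₂)) maps 𝒪 = {x₁ > ε₁, x₂ > −a₂x₁} diffeomorphically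
onto {ξ₁ > ε₁, a₁ξ₁ > ξ₂}. -/
theorem stmt_18 (a₁ a₂ ε₁ : ℝ) (ha₁ : 0 < a₁) (ha₂ : 0 < a₂) (hε₁ : 0 < ε₁) :
    let 𝒪 : Set (ℝ × ℝ) := {x | ε₁ < x.1 ∧ -a₂ * x.1 < x.2}
    let φ : ℝ × ℝ → ℝ × ℝ := fun x => (x.1, a₁ * x.1 * x.2 / (a₂ * x.1 + x.2))
    let T : Set (ℝ × ℝ) := {ξ | ε₁ < ξ.1 ∧ ξ.2 < a₁ * ξ.1}
    φ '' 𝒪 = T ∧ Set.InjOn φ 𝒪 ∧ ContDiffOn ℝ 1 φ 𝒪 ∧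
      ∃ g : ℝ × ℝ → ℝ × ℝ, ContDiffOn ℝ 1 g T ∧
        (∀ x ∈ 𝒪, g (φ x) = x) ∧ ∀ ξ ∈ T, φ (g ξ) = ξ := by
  intro 𝒪 φ T
  set g : ℝ × ℝ → ℝ × ℝ := fun ξ => (ξ.1, a₂ * ξ.1 * ξ.2 / (a₁ * ξ.1 - ξ.2)) with hg_def
  -- basic positivity facts
  have hd : ∀ x ∈ 𝒪, 0 < a₂ * x.1 + x.2 := by
    rintro ⟨x₁, x₂⟩ ⟨h1, h2⟩; dsimp only at h1 h2 ⊢; linarith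
  have hs : ∀ ξ ∈ T, 0 < a₁ * ξ.1 - ξ.2 := by
    rintro ⟨ξ₁, ξ₂⟩ ⟨h1, h2⟩; dsimp only at h1 h2 ⊢; linarith
  have hx1pos : ∀ x ∈ 𝒪, (0:ℝ) < x.1 := by
    rintro ⟨x₁, x₂⟩ ⟨h1, h2⟩; dsimp only at h1 h2 ⊢; linarith
  have hξ1pos : ∀ ξ ∈ T, (0:ℝ) < ξ.1 := by
    rintro ⟨ξ₁, ξ₂⟩ ⟨h1, h2⟩; dsimp only at h1 h2 ⊢; linarith
  have hφT : ∀ x ∈ 𝒪, φ x ∈ T := by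
    rintro ⟨x₁, x₂⟩ hx
    have hd' := hd _ hx
    have hx1 := hx1pos _ hx
    obtain ⟨h1, h2⟩ := hx
    dsimp only at h1 h2 hd' hx1
    refine ⟨h1, ?_⟩
    show a₁ * x₁ * x₂ / (a₂ * x₁ + x₂) < a₁ * x₁
    rw [div_lt_iff₀ hd']
    nlinarith [mul_pos (mul_pos ha₁ hx1) (mul_pos ha₂ hx1)]
  have hgO : ∀ ξ ∈ T, g ξ ∈ 𝒪 := by
    rintro ⟨ξ₁, ξ₂⟩ hξ
    have hs' := hs _ hξ
    have hξ1 := hξ1pos _ hξ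
    obtain ⟨h1, h2⟩ := hξ
    dsimp only at h1 h2 hs' hξ1
    refine ⟨h1, ?_⟩
    show -a₂ * ξ₁ < a₂ * ξ₁ * ξ₂ / (a₁ * ξ₁ - ξ₂)
    rw [lt_div_iff₀ hs']
    nlinarith [mul_pos (mul_pos ha₂ hξ1) (mul_pos ha₁ hξ1)]
  have hgφ : ∀ x ∈ 𝒪, g (φ x) = x := by
    rintro ⟨x₁, x₂⟩ hx
    have hd' := hd _ hx
    have hx1 := hx1pos _ hx
    have hT := (hφT _ hx).2
    dsimp only at hd' hx1 hT
    have he : a₁ * x₁ - a₁ * x₁ * x₂ / (a₂ * x₁ + x₂) ≠ 0 := by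
      have : 0 < a₁ * x₁ - a₁ * x₁ * x₂ / (a₂ * x₁ + x₂) := by linarith
      linarith
    simp only [hg_def, φ, Prod.mk.injEq]
    refine ⟨trivial, ?_⟩
    rw [div_eq_iff he]
    field_simp
    ring
  have hφg : ∀ ξ ∈ T, φ (g ξ) = ξ := by
    rintro ⟨ξ₁, ξ₂⟩ hξ
    have hs' := hs _ hξ
    have hξ1 := hξ1pos _ hξ
    have hO := (hgO _ hξ).2
    dsimp only at hs' hξ1 hO
    have he : a₂ * ξ₁ + a₂ * ξ₁ * ξ₂ / (a₁ * ξ₁ - ξ₂) ≠ 0 := by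
      have : 0 < a₂ * ξ₁ + a₂ * ξ₁ * ξ₂ / (a₁ * ξ₁ - ξ₂) := by linarith
      linarith
    simp only [hg_def, φ, Prod.mk.injEq]
    refine ⟨trivial, ?_⟩
    rw [div_eq_iff he]
    field_simp
    ring
  refine ⟨?_, ?_, ?_, g, ?_, hgφ, hφg⟩
  · ext ξ
    constructor
    · rintro ⟨x, hx, rfl⟩; exact hφT x hx
    · intro hξ; exact ⟨g ξ, hgO ξ hξ, hφg ξ hξ⟩
  · intro x hx y hy hxy
    have := congrArg g hxy
    rwa [hgφ x hx, hgφ y hy] at this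
  · exact ContDiffOn.prodMk (contDiff_fst.contDiffOn) <|
      ContDiffOn.div (by fun_prop : ContDiffOn ℝ 1 (fun x : ℝ × ℝ => a₁ * x.1 * x.2) 𝒪)
        (by fun_prop : ContDiffOn ℝ 1 (fun x : ℝ × ℝ => a₂ * x.1 + x.2) 𝒪) (fun x hx => (hd x hx).ne')
  · exact ContDiffOn.prodMk (contDiff_fst.contDiffOn) <|
      ContDiffOn.div (by fun_prop : ContDiffOn ℝ 1 (fun ξ : ℝ × ℝ => a₂ * ξ.1 * ξ.2) T)
        (by fun_prop : ContDiffOn ℝ 1 (fun ξ : ℝ × ℝ => a₁ * ξ.1 - ξ.2) T) (fun ξ hξ => (hs ξ hξ).ne')
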